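/- If a probability measure P on L^ℕ satisfies the Chargaff second parity rule with respect to the involution φ, then P is stationary: for all m ≥ 0, all (l_0,…,l_m) ∈ L^{m+1} and all t ≥ 1, P(Y_{k+t} = l_k, k = 0,…,m) = P(Y_k = l_k, k = 0,…,m). -/
import Mathlib


open MeasureTheory

section Aux

set_option linter.unusedSectionVars false

variable {L : Type*} [Fintype L] [MeasurableSpace L] [MeasurableSingletonClass L]

lemma meas_block (N : ℕ) (f : ℕ → L) :
    MeasurableSet {y : ℕ → L | ∀ k ≤ N, y k = f k} := by
  have h : {y : ℕ → L | ∀ k ≤ N, y k = f k}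
      = ⋂ k ∈ Finset.range (N + 1), (fun y : ℕ → L => y k) ⁻¹' {f k} := by
    ext y; simp [Nat.lt_succ_iff]
  rw [h]
  exact Finset.measurableSet_biInter _
    (fun k _ => (measurable_pi_apply k) (measurableSet_singleton _))

lemma set_congr (N : ℕ) (f g : ℕ → L) (h : ∀ k ≤ N, f k = g k) :
    {y : ℕ → L | ∀ k ≤ N, y k = f k} = {y : ℕ → L | ∀ k ≤ N, y k = g k} := by
  ext y
  constructor <;> intro hy k hk
  · rw [hy k hk]; exact h k hk
  · rw [hy k hk]; exact (h k hk).symm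

/-- Extension of a word `w` placed at positions `t, t+1, …` with prefix `u`. -/
def blockA (t : ℕ) (w : ℕ → L) (u : Fin t → L) (k : ℕ) : L :=
  if h : k < t then u ⟨k, h⟩ else w (k - t)

/-- Extension of a word `g` on `0..m` with suffix `u` on positions `m+1..m+t`. -/
def blockB (m t : ℕ) (g : ℕ → L) (u : Fin t → L) (k : ℕ) : L :=
  if k ≤ m then g k else if h2 : k - (m + 1) < t then u ⟨k - (m + 1), h2⟩ else g k

lemma sumA (P : Measure (ℕ → L)) (m t : ℕ) (w : ℕ → L) :
    P {y | ∀ k ≤ m, y (k + t) = w k}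
      = ∑ u : Fin t → L, P {y | ∀ k ≤ m + t, y k = blockA t w u k} := by
  have hunion : {y : ℕ → L | ∀ k ≤ m, y (k + t) = w k}
      = ⋃ u : Fin t → L, {y : ℕ → L | ∀ k ≤ m + t, y k = blockA t w u k} := by
    ext y
    simp only [Set.mem_iUnion, Set.mem_setOf_eq]
    constructor
    · intro hy
      refine ⟨fun i => y i, fun k hk => ?_⟩
      unfold blockA
      split_ifs with h
      · rfl
      · push_neg at h
        have hkt : k - t + t = k := Nat.sub_add_cancel h
        have h2 := hy (k - t) (by omega)
        rwa [hkt] at h2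
    · rintro ⟨u, hu⟩ k hk
      have h := hu (k + t) (by omega)
      unfold blockA at h
      rw [dif_neg (by omega)] at h
      simpa using h
  have hdisj : Pairwise (Function.onFun Disjoint
      (fun u : Fin t → L => {y : ℕ → L | ∀ k ≤ m + t, y k = blockA t w u k})) := by
    intro u v huv
    simp only [Function.onFun, Set.disjoint_left, Set.mem_setOf_eq]
    intro y hy hy'
    apply huv
    funext i
    have h1 := hy i (by omega : (i : ℕ) ≤ m + t)
    have h2 := hy' i (by omega : (i : ℕ) ≤ m + t)
    unfold blockA at h1 h2
    rw [dif_pos i.isLt] at h1 h2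
    rw [← Fin.eta i i.isLt, ← h1, ← h2]
  rw [hunion, measure_iUnion hdisj (fun u => meas_block _ _), tsum_fintype]

lemma sumB (P : Measure (ℕ → L)) (m t : ℕ) (g : ℕ → L) :
    P {y | ∀ k ≤ m, y k = g k}
      = ∑ u : Fin t → L, P {y | ∀ k ≤ m + t, y k = blockB m t g u k} := by
  have hunion : {y : ℕ → L | ∀ k ≤ m, y k = g k}
      = ⋃ u : Fin t → L, {y : ℕ → L | ∀ k ≤ m + t, y k = blockB m t g u k} := by
    ext y
    simp only [Set.mem_iUnion, Set.mem_setOf_eq]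
    constructor
    · intro hy
      refine ⟨fun i => y (m + 1 + i), fun k hk => ?_⟩
      unfold blockB
      split_ifs with h h2
      · exact hy k h
      · show y k = y (m + 1 + (k - (m + 1)))
        congr 1
        omega
      · omega
    · rintro ⟨u, hu⟩ k hk
      have h := hu k (by omega)
      unfold blockB at h
      rw [if_pos hk] at h
      exact h
  have hdisj : Pairwise (Function.onFun Disjoint
      (fun u : Fin t → L => {y : ℕ → L | ∀ k ≤ m + t, y k = blockB m t g u k})) := by
    intro u v huv
    simp only [Function.onFun, Set.disjoint_left, Set.mem_setOf_eq]
    intro y hy hy'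
    apply huv
    funext i
    have h1 := hy (m + 1 + i) (by omega : m + 1 + (i : ℕ) ≤ m + t)
    have h2 := hy' (m + 1 + i) (by omega : m + 1 + (i : ℕ) ≤ m + t)
    unfold blockB at h1 h2
    rw [if_neg (by omega)] at h1 h2
    have hlt : m + 1 + (i : ℕ) - (m + 1) < t := by omega
    rw [dif_pos hlt] at h1 h2
    have hi : (⟨m + 1 + (i : ℕ) - (m + 1), hlt⟩ : Fin t) = i := by
      ext; simp
    rw [hi] at h1 h2
    rw [← h1, ← h2]
  rw [hunion, measure_iUnion hdisj (fun u => meas_block _ _), tsum_fintype]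

end Aux

/-- If `P` satisfies the Chargaff second parity rule with respect to the involution `φ`,
then `P` is stationary:
`P(Y_{k+t} = l_k, k = 0,…,m) = P(Y_k = l_k, k = 0,…,m)` for every `t ≥ 1`. -/
theorem stmt_11 {L : Type*} [Fintype L] [MeasurableSpace L] [MeasurableSingletonClass L]
    (φ : L → L) (hφ : Function.Involutive φ)
    (P : Measure (ℕ → L)) [IsProbabilityMeasure P]
    (hcspr : ∀ (t m : ℕ) (w : ℕ → L),
      P {y | ∀ k ≤ m, y (k + t) = w k} = P {y | ∀ k ≤ m, y (k + t) = φ (w (m - k))}) :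
    ∀ (m : ℕ) (w : ℕ → L) (t : ℕ), 1 ≤ t →
      P {y | ∀ k ≤ m, y (k + t) = w k} = P {y | ∀ k ≤ m, y k = w k} := by
  intro m w t _
  -- the reversed-complemented word on 0..m
  set g : ℕ → L := fun k => φ (w (m - k)) with hg
  -- the involution on suffixes
  have hσdef : ∀ (u : Fin t → L) (j : Fin t), t - 1 - (j : ℕ) < t := by
    intro u j; omega
  set σ : (Fin t → L) → (Fin t → L) :=
    fun u j => φ (u ⟨t - 1 - (j : ℕ), by omega⟩) with hσ
  have hσinv : Function.Involutive σ := by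
    intro u
    funext j
    simp only [hσ]
    rw [hφ]
    congr 1
    ext
    simp
    omega
  -- Step 1: decompose the shifted cylinder
  have step1 := sumA P m t w
  -- Step 2: apply CSPR (at time 0) to each full block, then identify with blockB
  have step2 : ∀ u : Fin t → L,
      P {y | ∀ k ≤ m + t, y k = blockA t w u k}
        = P {y | ∀ k ≤ m + t, y k = blockB m t g (σ u) k} := by
    intro u
    have h := hcspr 0 (m + t) (blockA t w u)
    simp only [Nat.add_zero] at h
    rw [h]
    congr 1
    apply set_congr
    intro k hk
    unfold blockA blockB
    by_cases hkm : k ≤ m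
    · rw [if_pos hkm, dif_neg (by omega : ¬ m + t - k < t)]
      simp only [hg]
      congr 2
      omega
    · rw [if_neg hkm, dif_pos (by omega : k - (m + 1) < t),
        dif_pos (by omega : m + t - k < t)]
      simp only [hσ]
      congr 2
      ext
      simp
      omega
  -- Step 3: re-sum using the bijection σ
  have step3 : ∑ u : Fin t → L, P {y | ∀ k ≤ m + t, y k = blockB m t g (σ u) k}
      = ∑ u : Fin t → L, P {y | ∀ k ≤ m + t, y k = blockB m t g u k} :=
    Fintype.sum_bijective σ hσinv.bijective _ _ (fun u => rfl)
  -- Step 4: recombine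
  have step4 := sumB P m t g
  have key : P {y | ∀ k ≤ m, y (k + t) = w k} = P {y | ∀ k ≤ m, y k = g k} := by
    rw [step1, step4]
    rw [← step3]
    exact Finset.sum_congr rfl (fun u _ => step2 u)
  rw [key]
  have h := hcspr 0 m g
  simp only [Nat.add_zero] at h
  rw [h]
  congr 1
  apply set_congr
  intro k hk
  simp only [hg]
  have : m - (m - k) = k := by omega
  rw [this, hφ]
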